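/- Let (Ω, ℱ, P) be a probability space with a filtration (ℱⱼ)_{j=0}^{N}, and let ξ₀, …, ξ_{N−1} : Ω → ℝ^d be square-integrable random vectors such that each ξⱼ is ℱ_{j+1}-measurable, 𝔼[ξⱼ | ℱⱼ] = 0 almost surely, and 𝔼[‖ξⱼ‖² | ℱⱼ] ≤ σ_g²/S almost surely. Fix w ∈ ℝ^d and define the stochastic path w₀ = w, w_{j+1} = wⱼ − α(∇l(wⱼ) + ξⱼ) for j = 0,…,N−1 (so that wⱼ is ℱⱼ-measurable), and the deterministic inner gradient-descent path w̃₀ = w, w̃_{j+1} = w̃ⱼ − α∇l(w̃ⱼ). Then for every j = 0,…,N, 𝔼‖wⱼ − w̃ⱼ‖² ≤ ((1 + 2αL + 2α²L²)^j − 1) · α σ_g² / ((1 + αL) L S). -/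

import Mathlib

open MeasureTheory
open scoped ENNReal

noncomputable def innerPath {d : ℕ} (α : ℝ) (l : EuclideanSpace ℝ (Fin d) → ℝ) :
    ℕ → EuclideanSpace ℝ (Fin d) → EuclideanSpace ℝ (Fin d)
  | 0, w => w
  | j + 1, w => innerPath α l j w - α • gradient l (innerPath α l j w)

noncomputable def hessProd {d : ℕ} (α : ℝ) (N : ℕ)
    (lS : EuclideanSpace ℝ (Fin d) → ℝ) (w : EuclideanSpace ℝ (Fin d)) :
    EuclideanSpace ℝ (Fin d) →L[ℝ] EuclideanSpace ℝ (Fin d) :=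
  ((List.range N).map fun j =>
    ContinuousLinearMap.id ℝ (EuclideanSpace ℝ (Fin d)) -
      α • fderiv ℝ (gradient lS) (innerPath α lS j w)).prod

noncomputable def metaGrad {d : ℕ} (α : ℝ) (N : ℕ)
    (lS lT : EuclideanSpace ℝ (Fin d) → ℝ) (w : EuclideanSpace ℝ (Fin d)) :
    EuclideanSpace ℝ (Fin d) :=
  hessProd α N lS w (gradient lT (innerPath α lS N w))

lemma aux_half : (1 : ℝ≥0∞) / 1 = 1 / 2 + 1 / 2 := by
  rw [one_div_one]; exact (ENNReal.add_halves 1).symm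

lemma aux_ortho {d : ℕ} {Ω : Type*} {m : MeasurableSpace Ω} {mΩ : MeasurableSpace Ω}
    (P : Measure Ω) [IsProbabilityMeasure P] (hm : m ≤ mΩ)
    {X ξ : Ω → EuclideanSpace ℝ (Fin d)}
    (hX : StronglyMeasurable[m] X) (hX2 : MemLp X 2 P) (hξ2 : MemLp ξ 2 P)
    (hc : P[ξ | m] =ᵐ[P] 0) :
    ∫ ω, (inner ℝ (X ω) (ξ ω) : ℝ) ∂P = 0 := by
  have hξ_int : Integrable ξ P := hξ2.integrable (by norm_num)
  have hXiSM : ∀ i, StronglyMeasurable[m] (fun ω => X ω i) := fun i =>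
    (EuclideanSpace.proj (𝕜 := ℝ) i).continuous.comp_stronglyMeasurable hX
  have hXi2 : ∀ i, MemLp (fun ω => X ω i) 2 P := fun i =>
    (EuclideanSpace.proj (𝕜 := ℝ) i).comp_memLp' hX2
  have hξi2 : ∀ i, MemLp (fun ω => ξ ω i) 2 P := fun i =>
    (EuclideanSpace.proj (𝕜 := ℝ) i).comp_memLp' hξ2
  have hmul_int : ∀ i, Integrable (fun ω => X ω i * ξ ω i) P := by
    intro i
    have h := ((hξi2 i).smul (hXi2 i) (r := 1))
    exact memLp_one_iff_integrable.mp h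
  have hξi0 : ∀ i, P[(fun ω => ξ ω i) | m] =ᵐ[P] 0 := by
    intro i
    refine (ae_eq_condExp_of_forall_setIntegral_eq hm
      ((hξi2 i).integrable (by norm_num))
      (fun s _ _ => (integrable_zero _ _ _ : Integrable (fun _ => (0:ℝ)) (P.restrict s))) (fun s hs hμs => ?_)
      (StronglyMeasurable.aestronglyMeasurable (stronglyMeasurable_const : StronglyMeasurable[m] fun _ => (0:ℝ)))).symm
    have hres : ∫ x in s, ξ x ∂P = 0 := by
      rw [← setIntegral_condExp hm hξ_int hs]
      rw [integral_congr_ae (ae_restrict_of_ae hc)]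
      simp
    have hcomp : ∫ x in s, (EuclideanSpace.proj (𝕜 := ℝ) i) (ξ x) ∂P
        = (EuclideanSpace.proj (𝕜 := ℝ) i) (∫ x in s, ξ x ∂P) :=
      ContinuousLinearMap.integral_comp_comm _ hξ_int.integrableOn
    simp only [PiLp.proj_apply] at hcomp
    rw [hcomp, hres]
    simp
  have hint0 : ∀ i, ∫ ω, X ω i * ξ ω i ∂P = 0 := by
    intro i
    have hpull := condExp_mul_of_stronglyMeasurable_left (μ := P) (m := m) (hXiSM i)
      (hmul_int i) ((hξi2 i).integrable (by norm_num))
    rw [← integral_condExp hm (f := fun ω => X ω i * ξ ω i)]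
    have h2 : (P[(fun ω => X ω i) * (fun ω => ξ ω i)|m]) =ᵐ[P] 0 :=
      hpull.trans ((hξi0 i).mono fun ω hω => by
        simp only [Pi.mul_apply, Pi.zero_apply] at hω ⊢
        rw [hω, mul_zero])
    calc ∫ ω, (P[fun ω => X ω i * ξ ω i|m]) ω ∂P
        = ∫ ω, (0 : Ω → ℝ) ω ∂P := integral_congr_ae h2
      _ = 0 := by simp
  have hinner : ∀ ω, (inner ℝ (X ω) (ξ ω) : ℝ) = ∑ i, X ω i * ξ ω i := fun ω => by
    simp [PiLp.inner_apply, RCLike.inner_apply, conj_trivial, mul_comm]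
  calc ∫ ω, (inner ℝ (X ω) (ξ ω) : ℝ) ∂P
      = ∫ ω, ∑ i, X ω i * ξ ω i ∂P := by simp_rw [hinner]
    _ = ∑ i, ∫ ω, X ω i * ξ ω i ∂P := integral_finset_sum _ (fun i _ => hmul_int i)
    _ = 0 := by simp [hint0]

lemma aux_arith (α L σg S IY Vξ ej : ℝ) (hα : 0 < α) (hL : 0 < L) (hS : 0 < S)
    (j : ℕ) (hej : 0 ≤ ej) (hV : 0 ≤ Vξ)
    (hIH : ej * ((1 + α * L) * L * S) ≤
      ((1 + 2 * α * L + 2 * α ^ 2 * L ^ 2) ^ j - 1) * α * σg ^ 2)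
    (hv : Vξ * S ≤ σg ^ 2)
    (hIY : IY ≤ (1 + α * L) ^ 2 * ej) :
    (IY + α ^ 2 * Vξ) * ((1 + α * L) * L * S) ≤
      ((1 + 2 * α * L + 2 * α ^ 2 * L ^ 2) ^ (j + 1) - 1) * α * σg ^ 2 := by
  have hKnn : (0:ℝ) ≤ (1 + α * L) * L * S := by positivity
  have hρ1 : (1:ℝ) ≤ 1 + 2 * α * L + 2 * α ^ 2 * L ^ 2 := by nlinarith
  have h1 : IY * ((1 + α * L) * L * S) ≤ (1 + α * L) ^ 2 * ej * ((1 + α * L) * L * S) := by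
    calc IY * ((1 + α * L) * L * S) ≤ ((1 + α * L) ^ 2 * ej) * ((1 + α * L) * L * S) :=
          mul_le_mul_of_nonneg_right hIY hKnn
      _ = _ := by ring
  have h2 : (1 + α * L) ^ 2 * ej * ((1 + α * L) * L * S)
      ≤ (1 + 2 * α * L + 2 * α ^ 2 * L ^ 2) * (ej * ((1 + α * L) * L * S)) := by
    nlinarith [mul_nonneg hej hKnn, sq_nonneg (α * L)]
  have h3 : (1 + 2 * α * L + 2 * α ^ 2 * L ^ 2) * (ej * ((1 + α * L) * L * S))
      ≤ (1 + 2 * α * L + 2 * α ^ 2 * L ^ 2) *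
        (((1 + 2 * α * L + 2 * α ^ 2 * L ^ 2) ^ j - 1) * α * σg ^ 2) :=
    mul_le_mul_of_nonneg_left hIH (by linarith)
  have h4 : α ^ 2 * Vξ * ((1 + α * L) * L * S) = α ^ 2 * (1 + α * L) * L * (Vξ * S) := by ring
  have h5 : α ^ 2 * (1 + α * L) * L * (Vξ * S) ≤ α ^ 2 * (1 + α * L) * L * σg ^ 2 :=
    mul_le_mul_of_nonneg_left hv (by positivity)
  have h6 : (1 + 2 * α * L + 2 * α ^ 2 * L ^ 2) *
        (((1 + 2 * α * L + 2 * α ^ 2 * L ^ 2) ^ j - 1) * α * σg ^ 2)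
      + α ^ 2 * (1 + α * L) * L * σg ^ 2
      ≤ ((1 + 2 * α * L + 2 * α ^ 2 * L ^ 2) ^ (j + 1) - 1) * α * σg ^ 2 := by
    rw [pow_succ (1 + 2 * α * L + 2 * α ^ 2 * L ^ 2) j]
    nlinarith [mul_nonneg (mul_nonneg (sq_nonneg α) hL.le) (sq_nonneg σg),
      mul_nonneg (mul_nonneg (pow_nonneg hα.le 3) (sq_nonneg L)) (sq_nonneg σg)]
  nlinarith [h1, h2, h3, h5, h6, h4]

theorem stmt8 {d : ℕ} (hd : 1 ≤ d) (α L σg S : ℝ) (hα : 0 < α) (hL : 0 < L)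
    (hσg : 0 < σg) (hS : 0 < S) (N : ℕ) (hN : 1 ≤ N)
    (l : EuclideanSpace ℝ (Fin d) → ℝ) (hdiff : Differentiable ℝ l)
    (hlip : ∀ w u : EuclideanSpace ℝ (Fin d), ‖gradient l w - gradient l u‖ ≤ L * ‖w - u‖)
    {Ω : Type*} {mΩ : MeasurableSpace Ω} (P : Measure Ω) [IsProbabilityMeasure P]
    (𝔽 : Filtration ℕ mΩ)
    (ξ : ℕ → Ω → EuclideanSpace ℝ (Fin d))
    (hmem : ∀ j < N, MemLp (ξ j) 2 P)
    (hmeas : ∀ j < N, StronglyMeasurable[𝔽 (j + 1)] (ξ j))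
    (hcond0 : ∀ j < N, P[ξ j | 𝔽 j] =ᵐ[P] 0)
    (hcondvar : ∀ j < N, ∀ᵐ ω ∂P, (P[fun ω' => ‖ξ j ω'‖ ^ 2 | 𝔽 j]) ω ≤ σg ^ 2 / S)
    (w0 : EuclideanSpace ℝ (Fin d)) (W : ℕ → Ω → EuclideanSpace ℝ (Fin d))
    (hW0 : ∀ ω, W 0 ω = w0)
    (hWrec : ∀ j < N, ∀ ω, W (j + 1) ω = W j ω - α • (gradient l (W j ω) + ξ j ω)) :
    ∀ j ≤ N, (∫ ω, ‖W j ω - innerPath α l j w0‖ ^ 2 ∂P) ≤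
      ((1 + 2 * α * L + 2 * α ^ 2 * L ^ 2) ^ j - 1) * α * σg ^ 2 /
        ((1 + α * L) * L * S) := by
  have hLip : LipschitzWith (Real.toNNReal L) (gradient l) := by
    apply LipschitzWith.of_dist_le_mul
    intro x y
    rw [dist_eq_norm, dist_eq_norm]
    calc ‖gradient l x - gradient l y‖ ≤ L * ‖x - y‖ := hlip x y
      _ = (Real.toNNReal L) * ‖x - y‖ := by rw [Real.coe_toNNReal _ hL.le]
  have hgcont : Continuous (gradient l) := hLip.continuous
  have hgMem : ∀ f : Ω → EuclideanSpace ℝ (Fin d), MemLp f 2 P →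
      MemLp (fun ω => gradient l (f ω)) 2 P := by
    intro f hf
    have hLip' : LipschitzWith (Real.toNNReal L) (fun x => gradient l x - gradient l 0) := by
      apply LipschitzWith.of_dist_le_mul
      intro x y
      rw [dist_sub_right]
      exact hLip.dist_le_mul x y
    have h1 : MemLp ((fun x => gradient l x - gradient l 0) ∘ f) 2 P :=
      hLip'.comp_memLp (by simp) hf
    have h2 := h1.add (memLp_const (gradient l 0))
    have : (fun ω => gradient l (f ω)) =
        (((fun x => gradient l x - gradient l 0) ∘ f) + fun _ => gradient l 0) := by
      funext ω; simp
    rw [this]; exact h2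
  have key : ∀ j, j ≤ N → StronglyMeasurable[𝔽 j] (W j) ∧ MemLp (W j) 2 P := by
    intro j
    induction j with
    | zero =>
      intro _
      have hWc : W 0 = fun _ => w0 := funext hW0
      rw [hWc]
      exact ⟨stronglyMeasurable_const, memLp_const w0⟩
    | succ j ih =>
      intro hj
      have hjN : j < N := hj
      obtain ⟨h1, h2⟩ := ih hjN.le
      have hrec : W (j+1) = fun ω => W j ω - α • (gradient l (W j ω) + ξ j ω) :=
        funext (hWrec j hjN)
      rw [hrec]
      constructor
      · have hWj1 : StronglyMeasurable[𝔽 (j+1)] (W j) := h1.mono (𝔽.mono (Nat.le_succ j))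
        have hgW : StronglyMeasurable[𝔽 (j+1)] (fun ω => gradient l (W j ω)) :=
          hgcont.comp_stronglyMeasurable hWj1
        exact hWj1.sub ((hgW.add (hmeas j hjN)).const_smul α)
      · exact h2.sub (((hgMem _ h2).add (hmem j hjN)).const_smul α)
  intro j
  induction j with
  | zero =>
    intro _
    simp [innerPath, hW0]
  | succ j ih =>
    intro hj
    have hjN : j < N := hj
    have hIH := ih hjN.le
    obtain ⟨hWSM, hW2⟩ := key j hjN.le
    set x := innerPath α l j w0 with hx
    set Y : Ω → EuclideanSpace ℝ (Fin d) :=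
      fun ω => (W j ω - x) - α • (gradient l (W j ω) - gradient l x) with hY
    have hY2 : MemLp Y 2 P :=
      (hW2.sub (memLp_const x)).sub
        (((hgMem _ hW2).sub (memLp_const (gradient l x))).const_smul α)
    have hYSM : StronglyMeasurable[𝔽 j] Y :=
      (hWSM.sub stronglyMeasurable_const).sub
        (((hgcont.comp_stronglyMeasurable hWSM).sub stronglyMeasurable_const).const_smul α)
    have hpoint : ∀ ω, W (j+1) ω - innerPath α l (j+1) w0 = Y ω - α • ξ j ω := by
      intro ω
      rw [hWrec j hjN ω]
      show W j ω - α • (gradient l (W j ω) + ξ j ω) -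
        (innerPath α l j w0 - α • gradient l (innerPath α l j w0)) = _
      rw [hY, ← hx]
      simp only [smul_add, smul_sub]
      abel
    have hD2 : MemLp (fun ω => W j ω - x) 2 P := hW2.sub (memLp_const x)
    have ID2 : Integrable (fun ω => ‖W j ω - x‖^2) P := hD2.norm.integrable_sq
    have I1 : Integrable (fun ω => ‖Y ω‖^2) P := hY2.norm.integrable_sq
    have I3 : Integrable (fun ω => ‖ξ j ω‖^2) P := (hmem j hjN).norm.integrable_sq
    have I2 : Integrable (fun ω => (inner ℝ (Y ω) (ξ j ω) : ℝ)) P := by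
      have hprod : Integrable (fun ω => ‖Y ω‖ * ‖ξ j ω‖) P :=
        memLp_one_iff_integrable.mp ((hmem j hjN).norm.smul hY2.norm (r := 1))
      refine hprod.mono' (AEStronglyMeasurable.inner hY2.1 (hmem j hjN).1) ?_
      filter_upwards with ω
      rw [Real.norm_eq_abs]
      exact abs_real_inner_le_norm _ _
    have hnorm_exp : ∀ ω, ‖Y ω - α • ξ j ω‖^2
        = ‖Y ω‖^2 - 2*α*(inner ℝ (Y ω) (ξ j ω) : ℝ) + α^2*‖ξ j ω‖^2 := by
      intro ω
      rw [norm_sub_sq_real, real_inner_smul_right, norm_smul, Real.norm_eq_abs,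
        abs_of_pos hα]
      ring
    have hI : (∫ ω, ‖W (j+1) ω - innerPath α l (j+1) w0‖^2 ∂P)
        = (∫ ω, ‖Y ω‖^2 ∂P) - 2*α*(∫ ω, (inner ℝ (Y ω) (ξ j ω) : ℝ) ∂P)
          + α^2*(∫ ω, ‖ξ j ω‖^2 ∂P) := by
      have heq : ∀ ω, ‖W (j+1) ω - innerPath α l (j+1) w0‖^2
          = ‖Y ω‖^2 - 2*α*(inner ℝ (Y ω) (ξ j ω) : ℝ) + α^2*‖ξ j ω‖^2 := fun ω => by
        rw [hpoint ω]; exact hnorm_exp ω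
      have Im2 : Integrable (fun ω => 2*α*(inner ℝ (Y ω) (ξ j ω) : ℝ)) P := by
        exact I2.const_mul _
      have Im3 : Integrable (fun ω => α^2*‖ξ j ω‖^2) P := by
        exact I3.const_mul _
      have Isub : Integrable (fun ω => ‖Y ω‖^2 - 2*α*(inner ℝ (Y ω) (ξ j ω) : ℝ)) P := by
        exact I1.sub Im2
      simp_rw [heq]
      rw [integral_add Isub Im3, integral_sub I1 Im2, integral_const_mul, integral_const_mul]
    have hOrtho : ∫ ω, (inner ℝ (Y ω) (ξ j ω) : ℝ) ∂P = 0 :=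
      aux_ortho P (𝔽.le j) hYSM hY2 (hmem j hjN) (hcond0 j hjN)
    have hVar : (∫ ω, ‖ξ j ω‖^2 ∂P) ≤ σg^2/S := by
      rw [← integral_condExp (𝔽.le j) (f := fun ω => ‖ξ j ω‖^2)]
      calc ∫ ω, (P[fun ω' => ‖ξ j ω'‖^2|𝔽 j]) ω ∂P
          ≤ ∫ _ω, σg^2/S ∂P :=
            integral_mono_ae integrable_condExp (integrable_const _) (hcondvar j hjN)
        _ = σg^2/S := by simp
    have hYle : ∀ ω, ‖Y ω‖^2 ≤ (1+α*L)^2 * ‖W j ω - x‖^2 := by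
      intro ω
      have h1 : ‖Y ω‖ ≤ (1+α*L) * ‖W j ω - x‖ := by
        calc ‖Y ω‖ ≤ ‖W j ω - x‖ + ‖α • (gradient l (W j ω) - gradient l x)‖ :=
              norm_sub_le _ _
          _ ≤ ‖W j ω - x‖ + α * (L * ‖W j ω - x‖) := by
              rw [norm_smul, Real.norm_eq_abs, abs_of_pos hα]
              exact add_le_add_right (mul_le_mul_of_nonneg_left (hlip _ _) hα.le) _
          _ = (1+α*L) * ‖W j ω - x‖ := by ring
      nlinarith [norm_nonneg (Y ω), norm_nonneg (W j ω - x)]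
    have hIY : (∫ ω, ‖Y ω‖^2 ∂P) ≤ (1+α*L)^2 * ∫ ω, ‖W j ω - x‖^2 ∂P := by
      calc (∫ ω, ‖Y ω‖^2 ∂P) ≤ ∫ ω, (1+α*L)^2 * ‖W j ω - x‖^2 ∂P :=
            integral_mono I1 (ID2.const_mul _) hYle
        _ = _ := integral_const_mul _ _
    rw [hI, hOrtho, mul_zero, sub_zero]
    have hK : 0 < (1 + α*L) * L * S := by positivity
    rw [le_div_iff₀ hK]
    exact aux_arith α L σg S _ _ _ hα hL hS j
      (integral_nonneg fun ω => sq_nonneg _) (integral_nonneg fun ω => sq_nonneg _)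
      ((le_div_iff₀ hK).mp hIH)
      (by have := (le_div_iff₀ hS).mp hVar; linarith)
      hIY
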